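/- arXiv:2309.00125 — 2 statements merged into one kernel-verified Lean document; each statement's English description precedes it below -/
import Mathlib

section
/- For a nonnegative real sequence (a_n), the series ∑ (a_n - log(1 + a_n)) converges if and only if the series ∑ a_n² converges. -/
lemma my_log_le (x : ℝ) (hx : 0 ≤ x) : Real.log (1 + x) ≤ x := by
  have := Real.log_le_sub_one_of_pos (x := 1 + x) (by linarith)
  linarith

lemma my_le_log (x : ℝ) (hx : 0 ≤ x) : x / (1 + x) ≤ Real.log (1 + x) := by
  have h1 : (0:ℝ) < 1 + x := by linarith
  have := Real.log_le_sub_one_of_pos (x := (1 + x)⁻¹) (by positivity)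
  rw [Real.log_inv] at this
  have h2 : (1 + x)⁻¹ - 1 = -(x / (1 + x)) := by field_simp; ring
  linarith [this.trans_eq h2]

lemma my_f_nonneg (x : ℝ) (hx : 0 ≤ x) : 0 ≤ x - Real.log (1 + x) := by
  linarith [my_log_le x hx]

lemma my_f_le_sq (x : ℝ) (hx : 0 ≤ x) : x - Real.log (1 + x) ≤ x ^ 2 := by
  have h1 : (0:ℝ) < 1 + x := by linarith
  have h := my_le_log x hx
  have h2 : x - x / (1 + x) = x ^ 2 / (1 + x) := by field_simp; ring
  have h3 : x ^ 2 / (1 + x) ≤ x ^ 2 := by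
    apply div_le_self (sq_nonneg x); linarith
  linarith

lemma my_f_mono {x y : ℝ} (hy : 0 ≤ y) (hxy : y ≤ x) :
    y - Real.log (1 + y) ≤ x - Real.log (1 + x) := by
  have h1 : (0:ℝ) < 1 + y := by linarith
  have h2 : (0:ℝ) < 1 + x := by linarith
  have h3 : Real.log (1 + x) - Real.log (1 + y) = Real.log ((1 + x) / (1 + y)) := by
    rw [Real.log_div h2.ne' h1.ne']
  have h4 := Real.log_le_sub_one_of_pos (x := (1 + x) / (1 + y)) (by positivity)
  have h5 : (1 + x) / (1 + y) - 1 = (x - y) / (1 + y) := by field_simp; ring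
  have h6 : (x - y) / (1 + y) ≤ x - y := by
    apply div_le_self (by linarith); linarith
  linarith [h4.trans (h5.le.trans h6), h3]

lemma my_sq_le_f (x : ℝ) (h0 : 0 ≤ x) (h1 : x ≤ 1/4) :
    x ^ 2 ≤ 6 * (x - Real.log (1 + x)) := by
  have habs : |(-x)| < 1 := by rw [abs_neg, abs_of_nonneg h0]; linarith
  have key := Real.abs_log_sub_add_sum_range_le habs 2
  have hsum : (∑ i ∈ Finset.range 2, (-x) ^ (i + 1) / (i + 1)) = -x + x ^ 2 / 2 := by
    simp [Finset.sum_range_succ]; ring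
  rw [hsum, sub_neg_eq_add, abs_neg, abs_of_nonneg h0] at key
  -- key : |(-x + x^2/2) + log (1 + x)| ≤ x^3 / (1 - x)
  have hx1 : x ^ 3 / (1 - x) ≤ x ^ 2 / 3 := by
    have h34 : (3:ℝ)/4 ≤ 1 - x := by linarith
    rw [div_le_div_iff₀ (by linarith) (by norm_num)]
    nlinarith [sq_nonneg x]
  have hk := (abs_le.mp key).2
  linarith [hk.trans hx1]

theorem stmt_0 (a : ℕ → ℝ) (ha : ∀ n, 0 ≤ a n) :
    Summable (fun n => a n - Real.log (1 + a n)) ↔ Summable (fun n => (a n) ^ 2) := by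
  constructor
  · intro hs
    -- a n eventually ≤ 1/4
    have htend : Filter.Tendsto (fun n => a n - Real.log (1 + a n)) Filter.atTop (nhds 0) :=
      hs.tendsto_atTop_zero
    have hfq : 0 < (1/4 : ℝ) - Real.log (1 + 1/4) := by
      have := Real.log_lt_sub_one_of_pos (x := (1 + 1/4 : ℝ)) (by norm_num) (by norm_num)
      linarith
    have hev : ∀ᶠ n in Filter.atTop, a n ≤ 1/4 := by
      filter_upwards [htend.eventually (gt_mem_nhds hfq)] with n hn
      by_contra hcon
      push_neg at hcon
      have := my_f_mono (x := a n) (y := 1/4) (by norm_num) hcon.le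
      linarith
    obtain ⟨N, hN⟩ := Filter.eventually_atTop.mp hev
    rw [← summable_nat_add_iff N] at hs ⊢
    apply Summable.of_nonneg_of_le (fun n => sq_nonneg _) (fun n => ?_) (hs.mul_left 6)
    exact my_sq_le_f (a (n + N)) (ha _) (hN (n + N) (Nat.le_add_left N n))
  · intro hs
    exact Summable.of_nonneg_of_le (fun n => my_f_nonneg _ (ha n))
      (fun n => my_f_le_sq _ (ha n)) hs
end

section
/- Let (λ_j) satisfy c₁ j^{−β} ≤ λ_j ≤ c₂ j^{−β} for constants c₁, c₂ > 0 and β > 1, and let η > 1/2 + 1/β. Then there is a constant c > 0 (depending only on c₁, c₂, β, η) such that for all ψ ∈ (0, 1], ∑_{j=1}^∞ λ_j^{η − 1/2}/(λ_j^η + ψ) ≤ c · ψ^{−(1/η)(1/β + 1/2)}. -/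
open Real Finset

lemma mvt_step (γ a : ℝ) (hγ : 1 < γ) (ha : 0 < a) :
    (γ - 1) * (a + 1) ^ (-γ) ≤ a ^ (1 - γ) - (a + 1) ^ (1 - γ) := by
  have hcont : ContinuousOn (fun x : ℝ => x ^ (1 - γ)) (Set.Icc a (a + 1)) := by
    intro x hx
    have hx0 : x ≠ 0 := by have := hx.1; intro h; rw [h] at this; linarith
    exact ((Real.continuousAt_rpow_const x (1 - γ) (Or.inl hx0)).continuousWithinAt)
  have hderiv : ∀ x ∈ Set.Ioo a (a + 1),
      HasDerivAt (fun x : ℝ => x ^ (1 - γ)) ((1 - γ) * x ^ (1 - γ - 1)) x := by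
    intro x hx
    exact Real.hasDerivAt_rpow_const (Or.inl (by have := hx.1; intro h; rw [h] at this; linarith))
  obtain ⟨c, hc, hc'⟩ := exists_hasDerivAt_eq_slope (fun x : ℝ => x ^ (1 - γ))
    (fun x => (1 - γ) * x ^ (1 - γ - 1)) (by linarith : a < a + 1) hcont hderiv
  have hc0 : 0 < c := ha.trans hc.1
  have hc1 : c ≤ a + 1 := hc.2.le
  have heq : (1 - γ) * c ^ (1 - γ - 1) = (a + 1) ^ (1 - γ) - a ^ (1 - γ) := by
    rw [hc']; ring_nf
  have h1 : (a + 1) ^ (-γ) ≤ c ^ (-γ) :=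
    Real.rpow_le_rpow_of_nonpos hc0 hc1 (by linarith)
  have h2 : (γ - 1) * (a + 1) ^ (-γ) ≤ (γ - 1) * c ^ (-γ) :=
    mul_le_mul_of_nonneg_left h1 (by linarith)
  have h3 : (γ - 1) * c ^ (-γ) = a ^ (1 - γ) - (a + 1) ^ (1 - γ) := by
    have : (1 - γ - 1) = -γ := by ring
    rw [this] at heq; nlinarith [heq]
  linarith

lemma tail_bound (γ : ℝ) (hγ : 1 < γ) (J : ℕ) (hJ : 1 ≤ J) :
    ∑' i : ℕ, ((i : ℝ) + (J : ℝ) + 1) ^ (-γ) ≤ (J : ℝ) ^ (1 - γ) / (γ - 1) := by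
  have hJ0 : (1 : ℝ) ≤ (J : ℝ) := by exact_mod_cast hJ
  have hs0 : Summable (fun n : ℕ => ((n : ℝ)) ^ (-γ)) :=
    Real.summable_nat_rpow.mpr (by linarith)
  have hs : Summable (fun n : ℕ => ((n : ℝ) + (J : ℝ) + 1) ^ (-γ)) := by
    have h1 := (summable_nat_add_iff (f := fun n : ℕ => ((n : ℝ)) ^ (-γ)) (J + 1)).mpr hs0
    exact h1.congr (fun n => by push_cast; ring_nf)
  apply Summable.tsum_le_of_sum_range_le hs
  intro n
  rw [le_div_iff₀ (by linarith : (0:ℝ) < γ - 1)]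
  set f : ℕ → ℝ := fun i => ((J : ℝ) + i) ^ (1 - γ) with hf
  have key : ∀ i : ℕ, ((i : ℝ) + (J : ℝ) + 1) ^ (-γ) * (γ - 1) ≤ f i - f (i + 1) := by
    intro i
    have ha : (0:ℝ) < (J : ℝ) + i := by positivity
    have hm := mvt_step γ ((J : ℝ) + i) hγ ha
    have he : ((J : ℝ) + i) + 1 = (i : ℝ) + (J : ℝ) + 1 := by ring
    rw [he] at hm
    calc ((i : ℝ) + (J : ℝ) + 1) ^ (-γ) * (γ - 1)
        = (γ - 1) * ((i : ℝ) + (J : ℝ) + 1) ^ (-γ) := by ring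
      _ ≤ ((J : ℝ) + i) ^ (1 - γ) - ((i : ℝ) + (J : ℝ) + 1) ^ (1 - γ) := hm
      _ = f i - f (i + 1) := by
          simp only [hf]; congr 2; push_cast; ring
  calc (∑ i ∈ range n, ((i : ℝ) + (J : ℝ) + 1) ^ (-γ)) * (γ - 1)
      = ∑ i ∈ range n, ((i : ℝ) + (J : ℝ) + 1) ^ (-γ) * (γ - 1) := by
        rw [Finset.sum_mul]
    _ ≤ ∑ i ∈ range n, (f i - f (i + 1)) :=
        Finset.sum_le_sum (fun i _ => key i)
    _ = f 0 - f n := Finset.sum_range_sub' f n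
    _ ≤ (J : ℝ) ^ (1 - γ) := by
        have h1 : (0:ℝ) ≤ f n := by simp only [hf]; positivity
        have h2 : f 0 = (J : ℝ) ^ (1 - γ) := by simp [hf]
        linarith

set_option maxHeartbeats 1600000 in
theorem stmt_13 (c₁ c₂ β η : ℝ) (hc₁ : 0 < c₁) (hc₂ : 0 < c₂) (hβ : 1 < β)
    (hη : 1 / 2 + 1 / β < η)
    (lam : ℕ → ℝ)
    (hlow : ∀ j : ℕ, c₁ * ((j : ℝ) + 1) ^ (-β) ≤ lam (j + 1))
    (hhigh : ∀ j : ℕ, lam (j + 1) ≤ c₂ * ((j : ℝ) + 1) ^ (-β)) :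
    ∃ c : ℝ, 0 < c ∧ ∀ ψ : ℝ, 0 < ψ → ψ ≤ 1 →
      ∑' j : ℕ, lam (j + 1) ^ (η - 1 / 2) / (lam (j + 1) ^ η + ψ) ≤
        c * ψ ^ (-(1 / η) * (1 / β + 1 / 2)) := by
  have hβ0 : (0:ℝ) < β := by linarith
  have hβinv : (0:ℝ) < 1 / β := by positivity
  have hη0 : (0:ℝ) < η := by linarith
  have hη12 : (0:ℝ) ≤ η - 1 / 2 := by linarith
  set γ : ℝ := β * (η - 1 / 2) with hγdef
  have hγ : 1 < γ := by
    have hb : β * (1 / β) = 1 := by field_simp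
    have h1 : 1 / β < η - 1 / 2 := by linarith
    nlinarith [mul_lt_mul_of_pos_left h1 hβ0]
  have hγ1 : (0:ℝ) < γ - 1 := by linarith
  have hlam_pos : ∀ j : ℕ, 0 < lam (j + 1) := fun j =>
    lt_of_lt_of_le (by positivity) (hlow j)
  set e : ℝ := -(1 / η) * (1 / β + 1 / 2) with he
  set C₁ : ℝ := c₁ ^ (-(1/2 : ℝ)) * 2 ^ (1 + β / 2) with hC₁
  set C₂ : ℝ := c₂ ^ (η - 1/2) / (γ - 1) with hC₂
  have hC₁0 : 0 < C₁ := by rw [hC₁]; positivity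
  have hC₂0 : 0 < C₂ := by rw [hC₂]; positivity
  refine ⟨C₁ + C₂, by linarith, ?_⟩
  intro ψ hψ hψ1
  set a : ℕ → ℝ := fun j => lam (j + 1) ^ (η - 1 / 2) / (lam (j + 1) ^ η + ψ) with ha
  have hden_pos : ∀ j : ℕ, 0 < lam (j + 1) ^ η + ψ := fun j => by
    have := Real.rpow_pos_of_pos (hlam_pos j) η; linarith
  have ha_nonneg : ∀ j, 0 ≤ a j := fun j =>
    div_nonneg (Real.rpow_nonneg (hlam_pos j).le _) (hden_pos j).le
  -- termwise upper bound used for summability and for the tail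
  have key : ∀ j : ℕ, a j ≤ (c₂ ^ (η - 1/2) / ψ) * ((j : ℝ) + 1) ^ (-γ) := by
    intro j
    have hnum : lam (j + 1) ^ (η - 1/2) ≤ c₂ ^ (η - 1/2) * ((j : ℝ) + 1) ^ (-γ) := by
      have h1 : lam (j + 1) ^ (η - 1/2) ≤ (c₂ * ((j : ℝ) + 1) ^ (-β)) ^ (η - 1/2) :=
        Real.rpow_le_rpow (hlam_pos j).le (hhigh j) hη12
      have h2 : (c₂ * ((j : ℝ) + 1) ^ (-β)) ^ (η - 1/2)
          = c₂ ^ (η - 1/2) * ((j : ℝ) + 1) ^ (-γ) := by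
        rw [Real.mul_rpow hc₂.le (by positivity), ← Real.rpow_mul (by positivity)]
        rw [show (-β) * (η - 1/2) = -γ by rw [hγdef]; ring]
      exact h1.trans_eq h2
    have hb1 : a j ≤ lam (j + 1) ^ (η - 1/2) / ψ := by
      simp only [ha]
      gcongr
      · exact Real.rpow_nonneg (hlam_pos j).le _
      · have := Real.rpow_pos_of_pos (hlam_pos j) η; linarith
    have hb2 : lam (j + 1) ^ (η - 1/2) / ψ ≤ (c₂ ^ (η - 1/2) * ((j : ℝ) + 1) ^ (-γ)) / ψ := by
      gcongr
    calc a j ≤ _ := hb1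
      _ ≤ _ := hb2
      _ = (c₂ ^ (η - 1/2) / ψ) * ((j : ℝ) + 1) ^ (-γ) := by ring
  have hsb : Summable (fun j : ℕ => (c₂ ^ (η - 1/2) / ψ) * ((j : ℝ) + 1) ^ (-γ)) := by
    have hs0 : Summable (fun n : ℕ => ((n : ℝ)) ^ (-γ)) :=
      Real.summable_nat_rpow.mpr (by linarith)
    have h1 := (summable_nat_add_iff (f := fun n : ℕ => ((n : ℝ)) ^ (-γ)) 1).mpr hs0
    exact (h1.congr (fun n => by push_cast; ring_nf)).mul_left _
  have hsa : Summable a := Summable.of_nonneg_of_le ha_nonneg key hsb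
  -- the cut point
  set x : ℝ := ψ ^ (-(1 / (β * η))) with hx
  have hx1 : 1 ≤ x :=
    Real.one_le_rpow_of_pos_of_le_one_of_nonpos hψ hψ1 (neg_nonpos_of_nonneg (by positivity))
  have hx0 : 0 < x := by linarith
  set J : ℕ := ⌈x⌉₊ with hJ
  have hJ1 : 1 ≤ J := Nat.one_le_ceil_iff.mpr hx0
  have hJx : x ≤ (J : ℝ) := Nat.le_ceil x
  have hJ2x : (J : ℝ) ≤ 2 * x := by
    have h : (J : ℝ) < x + 1 := Nat.ceil_lt_add_one hx0.le
    linarith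
  -- exponent bookkeeping
  have hβη : β * η ≠ 0 := by positivity
  have hexp_head : x ^ (1 + β / 2) = ψ ^ e := by
    rw [hx, ← Real.rpow_mul hψ.le]
    congr 1
    rw [he]
    field_simp
  have hexp_tail : ψ⁻¹ * x ^ (1 - γ) = ψ ^ e := by
    rw [hx, ← Real.rpow_mul hψ.le, ← Real.rpow_neg_one ψ, ← Real.rpow_add hψ]
    congr 1
    rw [he, hγdef]
    field_simp
    ring
  -- head bound
  have hhead : ∑ i ∈ Finset.range J, a i ≤ C₁ * ψ ^ e := by
    have hterm : ∀ i ∈ Finset.range J, a i ≤ c₁ ^ (-(1/2:ℝ)) * (2 * x) ^ (β / 2) := by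
      intro i hi
      have hiJ : (i : ℝ) + 1 ≤ (J : ℝ) := by
        have := Finset.mem_range.mp hi
        exact_mod_cast Nat.succ_le_of_lt this
      have s1 : a i ≤ lam (i + 1) ^ (η - 1/2) / lam (i + 1) ^ η := by
        simp only [ha]
        gcongr
        · exact Real.rpow_nonneg (hlam_pos i).le _
        · exact Real.rpow_pos_of_pos (hlam_pos i) η
        · linarith
      have s2 : lam (i + 1) ^ (η - 1/2) / lam (i + 1) ^ η = lam (i + 1) ^ (-(1/2:ℝ)) := by
        rw [← Real.rpow_sub (hlam_pos i)]
        congr 1; ring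
      have s3 : lam (i + 1) ^ (-(1/2:ℝ)) ≤ (c₁ * ((i : ℝ) + 1) ^ (-β)) ^ (-(1/2:ℝ)) :=
        Real.rpow_le_rpow_of_nonpos (by positivity) (hlow i) (by norm_num)
      have s4 : (c₁ * ((i : ℝ) + 1) ^ (-β)) ^ (-(1/2:ℝ))
          = c₁ ^ (-(1/2:ℝ)) * ((i : ℝ) + 1) ^ (β / 2) := by
        rw [Real.mul_rpow hc₁.le (by positivity), ← Real.rpow_mul (by positivity)]
        rw [show (-β) * (-(1/2:ℝ)) = β / 2 by ring]
      have s5 : c₁ ^ (-(1/2:ℝ)) * ((i : ℝ) + 1) ^ (β / 2)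
          ≤ c₁ ^ (-(1/2:ℝ)) * (2 * x) ^ (β / 2) :=
        mul_le_mul_of_nonneg_left
          (Real.rpow_le_rpow (by positivity) (by linarith) (by positivity))
          (Real.rpow_nonneg hc₁.le _)
      calc a i ≤ _ := s1
        _ = _ := s2
        _ ≤ _ := s3
        _ = _ := s4
        _ ≤ _ := s5
    have hsumle : ∑ i ∈ Finset.range J, a i
        ≤ (J : ℝ) * (c₁ ^ (-(1/2:ℝ)) * (2 * x) ^ (β / 2)) := by
      have := Finset.sum_le_card_nsmul (Finset.range J) a
        (c₁ ^ (-(1/2:ℝ)) * (2 * x) ^ (β / 2)) hterm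
      simpa [Finset.card_range, nsmul_eq_mul] using this
    have hT0 : (0:ℝ) ≤ c₁ ^ (-(1/2:ℝ)) * (2 * x) ^ (β / 2) := by positivity
    have hsumle2 : ∑ i ∈ Finset.range J, a i
        ≤ 2 * x * (c₁ ^ (-(1/2:ℝ)) * (2 * x) ^ (β / 2)) := by
      calc ∑ i ∈ Finset.range J, a i ≤ _ := hsumle
        _ ≤ 2 * x * (c₁ ^ (-(1/2:ℝ)) * (2 * x) ^ (β / 2)) := by
            exact mul_le_mul_of_nonneg_right hJ2x hT0
    have hfin : 2 * x * (c₁ ^ (-(1/2:ℝ)) * (2 * x) ^ (β / 2)) = C₁ * ψ ^ e := by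
      rw [Real.mul_rpow (by norm_num) hx0.le, hC₁, ← hexp_head]
      rw [Real.rpow_add two_pos, Real.rpow_one, Real.rpow_add hx0, Real.rpow_one]
      ring
    linarith [hsumle2, hfin.le, hfin.ge]
  -- tail bound
  have htail : ∑' i : ℕ, a (i + J) ≤ C₂ * ψ ^ e := by
    have t1 : ∑' i : ℕ, a (i + J)
        ≤ ∑' i : ℕ, (c₂ ^ (η - 1/2) / ψ) * (((i + J : ℕ) : ℝ) + 1) ^ (-γ) :=
      Summable.tsum_le_tsum (fun i => key (i + J)) ((summable_nat_add_iff J).mpr hsa)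
        ((summable_nat_add_iff J).mpr hsb)
    have t2 : ∑' i : ℕ, (c₂ ^ (η - 1/2) / ψ) * (((i + J : ℕ) : ℝ) + 1) ^ (-γ)
        = (c₂ ^ (η - 1/2) / ψ) * ∑' i : ℕ, ((i : ℝ) + (J : ℝ) + 1) ^ (-γ) := by
      rw [tsum_mul_left]
      congr 1
      exact tsum_congr (fun i => by push_cast; ring_nf)
    have t3 : ∑' i : ℕ, ((i : ℝ) + (J : ℝ) + 1) ^ (-γ) ≤ (J : ℝ) ^ (1 - γ) / (γ - 1) :=
      tail_bound γ hγ J hJ1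
    have t4 : (J : ℝ) ^ (1 - γ) ≤ x ^ (1 - γ) :=
      Real.rpow_le_rpow_of_nonpos hx0 hJx (by linarith)
    have hcψ : (0:ℝ) ≤ c₂ ^ (η - 1/2) / ψ := by positivity
    have t5 : ∑' i : ℕ, a (i + J) ≤ (c₂ ^ (η - 1/2) / ψ) * (x ^ (1 - γ) / (γ - 1)) := by
      calc ∑' i : ℕ, a (i + J) ≤ _ := t1
        _ = _ := t2
        _ ≤ (c₂ ^ (η - 1/2) / ψ) * ((J : ℝ) ^ (1 - γ) / (γ - 1)) := by
            exact mul_le_mul_of_nonneg_left t3 hcψ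
        _ ≤ (c₂ ^ (η - 1/2) / ψ) * (x ^ (1 - γ) / (γ - 1)) := by
            apply mul_le_mul_of_nonneg_left _ hcψ
            exact div_le_div_of_nonneg_right t4 hγ1.le
    have t6 : (c₂ ^ (η - 1/2) / ψ) * (x ^ (1 - γ) / (γ - 1)) = C₂ * ψ ^ e := by
      rw [hC₂, ← hexp_tail]
      ring
    linarith [t5, t6.le]
  -- assemble
  rw [← Summable.sum_add_tsum_nat_add J hsa]
  calc ∑ i ∈ Finset.range J, a i + ∑' i : ℕ, a (i + J)
      ≤ C₁ * ψ ^ e + C₂ * ψ ^ e := add_le_add hhead htail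
    _ = (C₁ + C₂) * ψ ^ e := by ring
end
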